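/- Let N be a countable abelian group of finite exponent (i.e. there exists e ≥ 1 with e•x = 0 for all x ∈ N). Suppose that for every finite subgroup H of N which is a direct summand of N, there is a subgroup of N isomorphic to ⨁_ℕ H which is also a direct summand of N. Then there exists a finite abelian group H such that N is isomorphic to ⨁_ℕ H, the direct sum of countably infinitely many copies of H. -/

import Mathlib

section Retract

/-- `X` is (isomorphic to) a direct summand of `Y`. -/
def IsRetract (X Y : Type*) [AddCommGroup X] [AddCommGroup Y] : Prop :=
  ∃ (i : X →+ Y) (r : Y →+ X), ∀ x, r (i x) = x

namespace IsRetract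

variable {X Y Z W : Type*} [AddCommGroup X] [AddCommGroup Y] [AddCommGroup Z] [AddCommGroup W]

theorem of_addEquiv (e : X ≃+ Y) : IsRetract X Y :=
  ⟨e.toAddMonoidHom, e.symm.toAddMonoidHom, e.symm_apply_apply⟩

theorem trans (h1 : IsRetract X Y) (h2 : IsRetract Y Z) : IsRetract X Z := by
  obtain ⟨i1, r1, hh1⟩ := h1; obtain ⟨i2, r2, hh2⟩ := h2
  exact ⟨i2.comp i1, r1.comp r2, fun x => by simp [hh2, hh1]⟩

theorem prod (h1 : IsRetract X Y) (h2 : IsRetract Z W) : IsRetract (X × Z) (Y × W) := by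
  obtain ⟨i1, r1, hh1⟩ := h1; obtain ⟨i2, r2, hh2⟩ := h2
  refine ⟨i1.prodMap i2, r1.prodMap r2, fun x => ?_⟩
  simp [AddMonoidHom.prodMap, hh1, hh2]

theorem finsupp_single {ι : Type*} (i0 : ι) : IsRetract X (ι →₀ X) :=
  ⟨Finsupp.singleAddHom i0, Finsupp.applyAddHom i0, fun x => Finsupp.single_eq_same⟩

theorem finsupp_embDomain {ι κ : Type*} (f : ι ↪ κ) : IsRetract (ι →₀ X) (κ →₀ X) := by
  refine ⟨Finsupp.embDomain.addMonoidHom f, Finsupp.comapDomain.addMonoidHom f.injective,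
    fun x => ?_⟩
  ext a
  show Finsupp.comapDomain f (Finsupp.embDomain f x) _ a = x a
  exact Finsupp.embDomain_apply_self f x a

theorem finsupp_countable {ι : Type*} [Countable ι] : IsRetract (ι →₀ X) (ℕ →₀ X) := by
  obtain ⟨f, hf⟩ := (countable_iff_exists_injective ι).mp ‹_›
  exact finsupp_embDomain ⟨f, hf⟩

theorem finsupp_mapRange (h : IsRetract X Y) {ι : Type*} : IsRetract (ι →₀ X) (ι →₀ Y) := by
  obtain ⟨i, r, hh⟩ := h
  refine ⟨Finsupp.mapRange.addMonoidHom i, Finsupp.mapRange.addMonoidHom r, fun x => ?_⟩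
  ext a
  show Finsupp.mapRange r r.map_zero (Finsupp.mapRange i i.map_zero x) a = x a
  simp [Finsupp.mapRange_apply, hh]

theorem prod_finsupp_nat : IsRetract ((ℕ →₀ X) × (ℕ →₀ Y)) (ℕ →₀ (X × Y)) := by
  have h1 : IsRetract X (X × Y) := ⟨AddMonoidHom.inl X Y, AddMonoidHom.fst X Y, fun x => rfl⟩
  have h2 : IsRetract Y (X × Y) := ⟨AddMonoidHom.inr X Y, AddMonoidHom.snd X Y, fun x => rfl⟩
  refine ((h1.finsupp_mapRange (ι := ℕ)).prod (h2.finsupp_mapRange (ι := ℕ))).trans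
    (of_addEquiv ?_)
  exact Finsupp.sumFinsuppAddEquivProdFinsupp.symm.trans (Finsupp.domCongr Equiv.natSumNatEquivNat)

end IsRetract

/-- decomposition of the big group along a retraction -/
def retractEquivProd {X Y : Type*} [AddCommGroup X] [AddCommGroup Y]
    (i : X →+ Y) (r : Y →+ X) (h : ∀ x, r (i x) = x) : Y ≃+ X × r.ker where
  toFun y := (r y, ⟨y - i (r y), by simp [AddMonoidHom.mem_ker, h]⟩)
  invFun p := i p.1 + (p.2 : Y)
  left_inv y := by simp
  right_inv p := by
    obtain ⟨x, k⟩ := p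
    have hk : r (k : Y) = 0 := k.2
    refine Prod.ext (by simp [hk, h]) (Subtype.ext ?_)
    simp [hk, h]
  map_add' y z := by
    refine Prod.ext (by simp) (Subtype.ext ?_)
    simp [map_add]
    abel

end Retract

section Equivs

variable {Y W : Type*} [AddCommGroup Y] [AddCommGroup W]

/-- `PUnit ⊕ ℕ ≃ ℕ` -/
def punitSumNatEquiv : PUnit.{1} ⊕ ℕ ≃ ℕ where
  toFun x := match x with | .inl _ => 0 | .inr n => n + 1
  invFun n := match n with | 0 => .inl ⟨⟩ | n + 1 => .inr n
  left_inv := by rintro (⟨⟩ | n) <;> rfl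
  right_inv := by rintro (_ | n) <;> rfl

/-- split off one coordinate of `ℕ →₀ Y` -/
noncomputable def finsuppNatShift : (ℕ →₀ Y) ≃+ Y × (ℕ →₀ Y) :=
  (Finsupp.domCongr (punitSumNatEquiv.symm)).trans <|
    Finsupp.sumFinsuppAddEquivProdFinsupp.trans <|
      AddEquiv.prodCongr (Finsupp.LinearEquiv.finsuppUnique ℕ Y PUnit).toAddEquiv
        (AddEquiv.refl _)

/-- `ℕ →₀ (ℕ →₀ Y) ≃+ (ℕ →₀ Y)` -/
noncomputable def finsuppSelfSim : (ℕ →₀ (ℕ →₀ Y)) ≃+ (ℕ →₀ Y) :=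
  ((Finsupp.finsuppProdLEquiv ℕ (M := Y)).symm.toAddEquiv).trans
    (Finsupp.domCongr (Denumerable.eqv (ℕ × ℕ)))

/-- `ι →₀ (Y × W) ≃+ (ι →₀ Y) × (ι →₀ W)` -/
noncomputable def finsuppProdAddEquiv {ι : Type*} : (ι →₀ (Y × W)) ≃+ (ι →₀ Y) × (ι →₀ W) where
  toFun f := (f.mapRange Prod.fst rfl, f.mapRange Prod.snd rfl)
  invFun p := p.1.mapRange (fun y => (y, 0)) rfl + p.2.mapRange (fun w => (0, w)) rfl
  left_inv f := by
    ext a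
    · simp [Finsupp.mapRange_apply]
    · simp [Finsupp.mapRange_apply]
  right_inv p := by
    refine Prod.ext ?_ ?_ <;> ext a <;> simp [Finsupp.mapRange_apply]
  map_add' f g := by
    refine Prod.ext ?_ ?_ <;> ext a <;> simp [Finsupp.mapRange_apply]

end Equivs
section Swindle

/-- Eilenberg swindle: if each of `N` and `ℕ →₀ H` is a retract of the other,
they are isomorphic. -/
theorem addEquiv_of_retract_retract {H N : Type*} [AddCommGroup H] [AddCommGroup N]
    (h1 : IsRetract (ℕ →₀ H) N) (h2 : IsRetract N (ℕ →₀ H)) :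
    Nonempty (N ≃+ (ℕ →₀ H)) := by
  obtain ⟨i1, r1, hr1⟩ := h1
  set Y := r1.ker with hY
  have eN : N ≃+ (ℕ →₀ H) × Y := retractEquivProd i1 r1 hr1
  have hYN : IsRetract Y N := by
    refine IsRetract.trans ⟨AddMonoidHom.inr _ _, AddMonoidHom.snd _ _, fun x => rfl⟩
      (IsRetract.of_addEquiv eN.symm)
  have hYA : IsRetract Y (ℕ →₀ H) := hYN.trans h2
  obtain ⟨i2, r2, hr2⟩ := hYA
  set W := r2.ker with hW
  have eA : (ℕ →₀ H) ≃+ Y × W := retractEquivProd i2 r2 hr2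
  have e1 : N ≃+ ((ℕ →₀ Y) × (ℕ →₀ W)) × Y :=
    eN.trans <| AddEquiv.prodCongr
      ((finsuppSelfSim.symm.trans ((Finsupp.mapRange.addEquiv eA).trans finsuppProdAddEquiv)))
      (AddEquiv.refl _)
  have e2 : (((ℕ →₀ Y) × (ℕ →₀ W)) × Y) ≃+ ((ℕ →₀ Y) × Y) × (ℕ →₀ W) :=
    AddEquiv.prodAssoc.trans <|
      (AddEquiv.prodCongr (AddEquiv.refl _) AddEquiv.prodComm).trans AddEquiv.prodAssoc.symm
  have e3 : (((ℕ →₀ Y) × Y) × (ℕ →₀ W)) ≃+ (ℕ →₀ Y) × (ℕ →₀ W) :=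
    AddEquiv.prodCongr (AddEquiv.prodComm.trans finsuppNatShift.symm) (AddEquiv.refl _)
  have e4 : ((ℕ →₀ Y) × (ℕ →₀ W)) ≃+ (ℕ →₀ H) :=
    finsuppProdAddEquiv.symm.trans <|
      (Finsupp.mapRange.addEquiv eA.symm).trans finsuppSelfSim
  exact ⟨e1.trans <| e2.trans <| e3.trans e4⟩

end Swindle
section ZModLemmas

/-- `(n / gcd(d.val, n)) * d = 0` in `ZMod n`. -/
theorem zmod_ann_mul (n : ℕ) [NeZero n] (d : ZMod n) :
    ((n / Nat.gcd d.val n : ℕ) : ZMod n) * d = 0 := by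
  set g := Nat.gcd d.val n with hg
  obtain ⟨a, ha⟩ : g ∣ d.val := Nat.gcd_dvd_left _ _
  have hgd : g ∣ n := Nat.gcd_dvd_right _ _
  have hd : ((d.val : ℕ) : ZMod n) = d := ZMod.natCast_zmod_val d
  rw [← hd, ← Nat.cast_mul]
  have : (n / g) * d.val = n * a := by
    rw [ha, ← mul_assoc, Nat.div_mul_cancel hgd]
  rw [this, Nat.cast_mul, ZMod.natCast_self, zero_mul]

/-- double annihilator property in `ZMod n`: anything killed by `n / gcd(d.val, n)`
is a multiple of `d`. -/
theorem zmod_exists_mul (n : ℕ) [NeZero n] (d m : ZMod n)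
    (h : ((n / Nat.gcd d.val n : ℕ) : ZMod n) * m = 0) : ∃ c, d * c = m := by
  set g := Nat.gcd d.val n with hg
  have hgd : g ∣ n := Nat.gcd_dvd_right _ _
  have hnpos : 0 < n := Nat.pos_of_ne_zero (NeZero.ne n)
  have hgpos : 0 < g := Nat.gcd_pos_of_pos_right _ hnpos
  have hqpos : 0 < n / g := Nat.div_pos (Nat.le_of_dvd hnpos hgd) hgpos
  -- from h : n ∣ (n/g) * m.val
  have hm : ((d.val : ℕ) : ZMod n) = d := ZMod.natCast_zmod_val d
  have hmv : ((m.val : ℕ) : ZMod n) = m := ZMod.natCast_zmod_val m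
  have hdvd : n ∣ (n / g) * m.val := by
    rw [← ZMod.natCast_eq_zero_iff, Nat.cast_mul, hmv]
    exact h
  obtain ⟨t, ht⟩ := hdvd
  have hnt : n * t = (n / g) * (g * t) := by
    rw [← mul_assoc, Nat.div_mul_cancel hgd]
  have hmval : m.val = g * t := by
    have := ht.trans hnt
    exact Nat.eq_of_mul_eq_mul_left hqpos this
  -- g = d * u in ZMod n via Bezout
  have hbez := Nat.gcd_eq_gcd_ab d.val n
  have hgz : ((g : ℕ) : ZMod n) = d * (((Nat.gcdA d.val n : ℤ) : ZMod n)) := by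
    have : (((g : ℕ) : ℤ) : ZMod n) =
        ((((d.val : ℕ) : ℤ) * Nat.gcdA d.val n + ((n : ℕ) : ℤ) * Nat.gcdB d.val n : ℤ) : ZMod n) :=
      by rw [← hbez]
    push_cast at this
    rw [ZMod.natCast_self] at this
    simpa [hm] using this
  refine ⟨((Nat.gcdA d.val n : ℤ) : ZMod n) * (t : ℕ), ?_⟩
  rw [← mul_assoc, ← hgz, ← Nat.cast_mul, ← hmval, hmv]

end ZModLemmas

section Baer

instance zmod_pir (n : ℕ) : IsPrincipalIdealRing (ZMod n) :=
  IsPrincipalIdealRing.of_surjective (Int.castRingHom (ZMod n)) ZMod.intCast_surjective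

/-- Free `ZMod n`-modules satisfy Baer's criterion. -/
theorem baer_finsupp_zmod (n : ℕ) [NeZero n] (ι : Type*) :
    Module.Baer (ZMod n) (ι →₀ ZMod n) := by
  intro I f
  obtain ⟨d, hd⟩ := (IsPrincipalIdealRing.principal I).principal
  subst hd
  set q : ℕ := n / Nat.gcd d.val n with hq
  have hdI : d ∈ Ideal.span {d} := Ideal.mem_span_singleton_self d
  set m : ι →₀ ZMod n := f ⟨d, hdI⟩ with hm
  have hqm : (q : ZMod n) • m = 0 := by
    have h1 : ((q : ZMod n) • (⟨d, hdI⟩ : Ideal.span {d}) : Ideal.span {d}) = 0 := by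
      apply Subtype.ext
      show (q : ZMod n) • d = 0
      rw [smul_eq_mul]
      exact zmod_ann_mul n d
    rw [hm, ← map_smul, h1, map_zero]
  -- choose multipliers coordinatewise
  set u : ZMod n → ZMod n := fun t =>
    if ht : ∃ c, d * c = t then (if t = 0 then 0 else ht.choose) else 0 with hu
  have hu0 : u 0 = 0 := by simp [hu]
  set y : ι →₀ ZMod n := m.mapRange u hu0 with hy
  have hdy : ∀ a, d * y a = m a := by
    intro a
    rw [hy, Finsupp.mapRange_apply]
    by_cases hma : m a = 0
    · simp [hu, hma]
    · have hex : ∃ c, d * c = m a := by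
        apply zmod_exists_mul n d (m a)
        have := congrArg (fun z => z a) hqm
        simpa [Finsupp.smul_apply, smul_eq_mul] using this
      simp only [hu, dif_pos hex, if_neg hma]
      exact hex.choose_spec
  refine ⟨LinearMap.toSpanSingleton (ZMod n) _ y, fun x hx => ?_⟩
  obtain ⟨c, rfl⟩ := Ideal.mem_span_singleton'.mp hx
  have hsub : (⟨c * d, hx⟩ : Ideal.span {d}) = c • (⟨d, hdI⟩ : Ideal.span {d}) := by
    apply Subtype.ext
    show c * d = c • d
    rw [smul_eq_mul]
  rw [hsub, map_smul, ← hm]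
  show (c * d) • y = c • m
  rw [mul_smul]
  congr 1
  ext a
  rw [Finsupp.smul_apply, smul_eq_mul, hdy]

end Baer
section Step

variable {M : Type*} [AddCommGroup M]

/-- a scalar killing an element of additive order `n` is zero in `ZMod n` -/
theorem zmod_smul_eq_zero {n : ℕ} [NeZero n] [Module (ZMod n) M] {b : M}
    (hord : addOrderOf b = n) {c : ZMod n} (hc : c • b = 0) : c = 0 := by
  have h1 : (c.val : ℕ) • b = 0 := by
    rw [← Nat.cast_smul_eq_nsmul (ZMod n), ZMod.natCast_zmod_val]
    exact hc
  have h2 : addOrderOf b ∣ c.val := addOrderOf_dvd_of_nsmul_eq_zero h1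
  rw [hord] at h2
  have h3 : c.val < n := ZMod.val_lt c
  exact (ZMod.val_eq_zero c).mp (Nat.eq_zero_of_dvd_of_lt h2 h3)

/-- Key decomposition step: a nontrivial abelian group of exponent exactly `n` splits off a
nonzero free `ZMod n`-module whose complement has strictly smaller exponent. -/
theorem exists_step (n : ℕ) (hn : 1 < n) (hexp : ∀ x : M, n • x = 0)
    (hmin : AddMonoid.exponent M = n) :
    ∃ (s : Set M) (B : AddSubgroup M), s.Nonempty ∧
      Nonempty (M ≃+ (s →₀ ZMod n) × B) ∧ AddMonoid.exponent B < n := by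
  classical
  haveI : NeZero n := ⟨by omega⟩
  haveI : Module (ZMod n) M := AddCommGroup.zmodModule hexp
  -- Zorn : maximal linearly independent subset
  set S : Set (Set M) := {s | LinearIndependent (ZMod n) (fun x => x : s → M)} with hS
  obtain ⟨s, hsmax⟩ : ∃ s, Maximal (· ∈ S) s := by
    apply zorn_subset S
    intro c hcS hchain
    rcases c.eq_empty_or_nonempty with rfl | hne
    · exact ⟨∅, linearIndependent_empty _ _, by simp⟩
    · exact ⟨⋃₀ c, linearIndepOn_sUnion_of_directed (v := id) hchain.directedOn (fun a ha => hcS ha),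
        fun t ht => Set.subset_sUnion_of_mem ht⟩
  have hs : LinearIndependent (ZMod n) (fun x => x : s → M) := hsmax.prop
  -- splitting via Baer's criterion
  set φ : (s →₀ ZMod n) →ₗ[ZMod n] M :=
    Finsupp.linearCombination (ZMod n) (fun x => x : s → M) with hφ
  obtain ⟨ψ, hψeq⟩ := (baer_finsupp_zmod n s).extension_property φ hs LinearMap.id
  have hψ : ∀ f, ψ (φ f) = f := fun f => DFunLike.congr_fun hψeq f
  have hdisj : ∀ x : M, x ∈ Submodule.span (ZMod n) s → ψ x = 0 → x = 0 := by
    intro x hx hx0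
    have hrange : x ∈ LinearMap.range φ := by
      rw [hφ, Finsupp.range_linearCombination, Subtype.range_coe]
      exact hx
    obtain ⟨f, rfl⟩ := hrange
    rw [hψ] at hx0
    rw [hx0, map_zero]
  -- order-n elements of the kernel contradict maximality
  have hins : ∀ b : M, ψ b = 0 → addOrderOf b = n → False := by
    intro b hb hord
    have hbne : b ≠ 0 := by
      intro hb0
      rw [hb0, addOrderOf_zero] at hord
      omega
    have hbs : b ∉ s := fun hbs => hbne (hdisj b (Submodule.subset_span hbs) hb)
    have hli : (insert b s) ∈ S := by
      rw [hS, Set.mem_setOf_eq, linearIndependent_subtype_iff, linearIndepOn_iff]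
      intro l hl hl0
      have hsplit : Finsupp.single b (l b) + Finsupp.erase b l = l :=
        Finsupp.single_add_erase b l
      have herasesupp : Finsupp.erase b l ∈ Finsupp.supported (ZMod n) (ZMod n) s := by
        rw [Finsupp.mem_supported] at hl ⊢
        intro x hx
        rw [Finsupp.support_erase, Finset.coe_erase] at hx
        have := hl hx.1
        rcases this with h | h
        · exact absurd h hx.2
        · exact h
      have hspan : Finsupp.linearCombination (ZMod n) (id : M → M) (Finsupp.erase b l) ∈
          Submodule.span (ZMod n) s := by
        rw [Finsupp.linearCombination_apply]
        apply Submodule.sum_mem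
        intro i hi
        exact Submodule.smul_mem _ _
          (Submodule.subset_span ((Finsupp.mem_supported (ZMod n) _).mp herasesupp hi))
      have htot : l b • b + Finsupp.linearCombination (ZMod n) (id : M → M)
          (Finsupp.erase b l) = 0 := by
        rw [← hl0]
        conv_rhs => rw [← hsplit]
        rw [map_add, Finsupp.linearCombination_single]
        rfl
      have hmem : l b • b ∈ Submodule.span (ZMod n) s := by
        have : l b • b = -(Finsupp.linearCombination (ZMod n) (id : M → M)
            (Finsupp.erase b l)) := eq_neg_of_add_eq_zero_left htot
        rw [this]
        exact Submodule.neg_mem _ hspan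
      have hker : ψ (l b • b) = 0 := by rw [map_smul, hb, smul_zero]
      have hzero : l b • b = 0 := hdisj _ hmem hker
      have hlb : l b = 0 := zmod_smul_eq_zero hord hzero
      have herasetot : Finsupp.linearCombination (ZMod n) (id : M → M)
          (Finsupp.erase b l) = 0 := by
        rw [hlb, zero_smul, zero_add] at htot
        exact htot
      have heraseeq : Finsupp.erase b l = 0 :=
        (linearIndepOn_iff (v := id)).mp hs _ herasesupp herasetot
      rw [← hsplit, hlb, heraseeq, Finsupp.single_zero, zero_add]
    have : insert b s ⊆ s := hsmax.2 hli (Set.subset_insert b s)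
    exact hbs (this (Set.mem_insert b s))
  -- the decomposition
  set i₀ : (s →₀ ZMod n) →+ M := φ.toAddMonoidHom with hi₀
  set r₀ : M →+ (s →₀ ZMod n) := ψ.toAddMonoidHom with hr₀
  have hretr : ∀ f, r₀ (i₀ f) = f := hψ
  set B : AddSubgroup M := r₀.ker with hB
  have hBexp : ∀ x : B, n • x = 0 := by
    intro x
    apply Subtype.ext
    simpa using hexp (x : M)
  have hEEB : AddMonoid.ExponentExists B := ⟨n, by omega, hBexp⟩
  have hBdvd : AddMonoid.exponent B ∣ n := AddMonoid.exponent_dvd_of_forall_nsmul_eq_zero hBexp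
  have hBne : AddMonoid.exponent B ≠ n := by
    intro heq
    obtain ⟨b, hbord⟩ := AddMonoid.exists_addOrderOf_eq_exponent hEEB
    have hbord' : addOrderOf (b : M) = n :=
      (addOrderOf_injective B.subtype (AddSubgroup.subtype_injective B) b).trans
        (hbord.trans heq)
    have hbker : ψ (b : M) = 0 := b.2
    exact hins _ hbker hbord'
  have hBlt : AddMonoid.exponent B < n :=
    lt_of_le_of_ne (Nat.le_of_dvd (by omega) hBdvd) hBne
  -- nonemptiness of s
  have hEEM : AddMonoid.ExponentExists M := ⟨n, by omega, hexp⟩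
  obtain ⟨x₀, hx₀⟩ := AddMonoid.exists_addOrderOf_eq_exponent hEEM
  rw [hmin] at hx₀
  have hx₀S : ({x₀} : Set M) ∈ S := by
    rw [hS, Set.mem_setOf_eq, linearIndependent_subtype_iff, linearIndepOn_iff]
    intro l hl hl0
    rw [Finsupp.mem_supported] at hl
    have hsupp : l.support ⊆ {x₀} := by
      intro a ha
      simpa using hl ha
    have hl' : l = Finsupp.single x₀ (l x₀) := Finsupp.support_subset_singleton.mp hsupp
    have hz : (l x₀) • x₀ = 0 := by
      rw [hl'] at hl0
      rwa [Finsupp.linearCombination_single] at hl0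
    have hlx := zmod_smul_eq_zero hx₀ hz
    rw [hl', hlx, Finsupp.single_zero]
  have hsne : s.Nonempty := by
    rcases s.eq_empty_or_nonempty with rfl | hne
    · have : ({x₀} : Set M) ⊆ ∅ := hsmax.2 hx₀S (Set.empty_subset _)
      simpa using this (Set.mem_singleton x₀)
    · exact hne
  exact ⟨s, B, hsne, ⟨retractEquivProd i₀ r₀ hretr⟩, hBlt⟩

end Step
section Decomp

universe u

/-- Structure theorem, in retract form: a countable abelian group `M` of finite exponent has a
finite group `H` such that `H` is a retract of `M` and `M` is a retract of `ℕ →₀ H`. -/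
theorem exists_finite_retracts :
    ∀ (n : ℕ) (M : Type u) [AddCommGroup M] [Countable M],
      1 ≤ n → (∀ x : M, n • x = 0) →
      ∃ (H : Type) (_ : AddCommGroup H), Finite H ∧ IsRetract H M ∧ IsRetract M (ℕ →₀ H) := by
  intro n
  induction n using Nat.strong_induction_on with
  | _ n IH =>
    intro M _ _ hn hexp
    by_cases hsub : Subsingleton M
    · refine ⟨PUnit, inferInstance, inferInstance,
        ⟨0, 0, fun x => Subsingleton.elim _ _⟩, ⟨0, 0, fun x => Subsingleton.elim _ _⟩⟩
    · set n₀ := AddMonoid.exponent M with hn₀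
      have hEE : AddMonoid.ExponentExists M := ⟨n, by omega, hexp⟩
      have hn₀pos : 0 < n₀ := hEE.exponent_pos
      have hdvd : n₀ ∣ n := AddMonoid.exponent_dvd_of_forall_nsmul_eq_zero hexp
      have hn₀gt : 1 < n₀ := by
        rcases Nat.lt_or_ge 1 n₀ with hlt | hle
        · exact hlt
        · exfalso
          apply hsub
          have h1 : n₀ = 1 := le_antisymm hle hn₀pos
          refine ⟨fun a b => ?_⟩
          have ha := AddMonoid.exponent_nsmul_eq_zero (G := M) a
          have hb := AddMonoid.exponent_nsmul_eq_zero (G := M) b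
          rw [← hn₀, h1, one_nsmul] at ha hb
          rw [ha, hb]
      obtain ⟨s, B, hsne, ⟨e⟩, hBlt⟩ := exists_step n₀ hn₀gt
        (fun x => by rw [hn₀]; exact AddMonoid.exponent_nsmul_eq_zero x) rfl
      have hBbound : ∀ x : B, n • x = 0 := fun x => Subtype.ext (by simpa using hexp (x : M))
      have hEEB : AddMonoid.ExponentExists B := ⟨n, by omega, hBbound⟩
      have hBpos : 1 ≤ AddMonoid.exponent B := hEEB.exponent_pos
      have hBlt' : AddMonoid.exponent B < n :=
        lt_of_lt_of_le hBlt (Nat.le_of_dvd (by omega) hdvd)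
      obtain ⟨HB, instHB, hHBfin, hHBretr, hBretr⟩ :=
        IH _ hBlt' B hBpos (fun x => AddMonoid.exponent_nsmul_eq_zero x)
      haveI : NeZero n₀ := ⟨by omega⟩
      refine ⟨ZMod n₀ × HB, inferInstance, inferInstance, ?_, ?_⟩
      · obtain ⟨x, hx⟩ := hsne
        exact ((IsRetract.finsupp_single (⟨x, hx⟩ : s)).prod hHBretr).trans
          (IsRetract.of_addEquiv e.symm)
      · exact (IsRetract.of_addEquiv e).trans <|
          ((IsRetract.finsupp_countable).prod hBretr).trans IsRetract.prod_finsupp_nat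

end Decomp

/-- **Theorem C (abstract form).** Let `N` be a countable abelian group of finite exponent.
If for every finite subgroup `H` of `N` which is a direct summand of `N` there is a subgroup
of `N` isomorphic to `⨁_ℕ H` which is also a direct summand of `N`, then there exists a
finite abelian group `H` with `N ≅ ⨁_ℕ H` (encoded as `ℕ →₀ H`). -/
theorem countable_finite_exponent_structure
    (N : Type*) [AddCommGroup N] [Countable N]
    (e : ℕ) (he : 1 ≤ e) (hexp : ∀ x : N, e • x = 0)
    (h : ∀ H : AddSubgroup N, Finite H →
      (∃ ρ : N →+ N, (∀ x : N, ρ x ∈ H) ∧ ∀ a ∈ H, ρ a = a) →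
      ∃ K : AddSubgroup N, Nonempty (K ≃+ (ℕ →₀ H)) ∧
        ∃ σ : N →+ N, (∀ x : N, σ x ∈ K) ∧ ∀ a ∈ K, σ a = a) :
    ∃ (H : Type) (_ : AddCommGroup H), Finite H ∧ Nonempty (N ≃+ (ℕ →₀ H)) := by
  obtain ⟨H₀, instH₀, hfin, ⟨i, r, hir⟩, hNretr⟩ := exists_finite_retracts e N he hexp
  have hinj : Function.Injective i := Function.LeftInverse.injective hir
  set Hsub : AddSubgroup N := i.range with hHsub
  haveI hfinsub : Finite Hsub := by
    refine Finite.of_surjective (fun x : H₀ => (⟨i x, ⟨x, rfl⟩⟩ : Hsub)) ?_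
    rintro ⟨y, x, rfl⟩
    exact ⟨x, rfl⟩
  obtain ⟨K, ⟨eK⟩, σ, hσ1, hσ2⟩ := h Hsub hfinsub ⟨i.comp r, fun x => ⟨r x, rfl⟩, by
    rintro a ⟨x, rfl⟩
    show i (r (i x)) = i x
    rw [hir]⟩
  -- `ℕ →₀ H₀` is a retract of `N`
  have eH : H₀ ≃+ Hsub := AddMonoidHom.ofInjective hinj
  have eNK : (ℕ →₀ H₀) ≃+ K := (Finsupp.mapRange.addEquiv eH).trans eK.symm
  set σ' : N →+ K :=
    { toFun := fun x => ⟨σ x, hσ1 x⟩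
      map_zero' := Subtype.ext (by simp)
      map_add' := fun a b => Subtype.ext (by simp) } with hσ'
  have hAretr : IsRetract (ℕ →₀ H₀) N := by
    refine ⟨K.subtype.comp eNK.toAddMonoidHom, eNK.symm.toAddMonoidHom.comp σ', fun f => ?_⟩
    have h1 : σ' ((eNK f : N)) = eNK f := Subtype.ext (hσ2 _ (eNK f).2)
    show eNK.symm (σ' ((eNK f : N))) = f
    rw [h1, AddEquiv.symm_apply_apply]
  exact ⟨H₀, instH₀, hfin, addEquiv_of_retract_retract hAretr hNretr⟩
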